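/- If |s - s'| ≤ R^{-1/3}σ^{-1} and R^{-1/3} ≤ σ ≤ 1, then Θ(σ,s) ⊆ 7·Θ(σ,s'), where Θ(σ,s) = {w ∈ ℝ³ : |w₁| ≤ R^{-1/3}σ², |w₂ - 2sw₁| ≤ R^{-2/3}σ, |w₃ - 3sw₂ + 3s²w₁| ≤ R^{-1}} and 7·Θ(σ,s') denotes the set with all three bounds multiplied by 7. -/

import Mathlib

/-- If `|s - s'| ≤ R^{-1/3}σ⁻¹` and `R^{-1/3} ≤ σ ≤ 1`, then `Θ(σ,s) ⊆ 7·Θ(σ,s')`. -/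
theorem stmt_2 (R σ s s' : ℝ) (hR : 1 < R)
    (hσ₁ : R ^ (-(1/3) : ℝ) ≤ σ) (hσ₂ : σ ≤ 1)
    (hss' : |s - s'| ≤ R ^ (-(1/3) : ℝ) * σ⁻¹) :
    {w : ℝ × ℝ × ℝ | |w.1| ≤ R ^ (-(1/3) : ℝ) * σ^2 ∧
        |w.2.1 - 2*s*w.1| ≤ R ^ (-(2/3) : ℝ) * σ ∧
        |w.2.2 - 3*s*w.2.1 + 3*s^2*w.1| ≤ R ^ (-1 : ℝ)} ⊆
      {w : ℝ × ℝ × ℝ | |w.1| ≤ 7 * (R ^ (-(1/3) : ℝ) * σ^2) ∧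
        |w.2.1 - 2*s'*w.1| ≤ 7 * (R ^ (-(2/3) : ℝ) * σ) ∧
        |w.2.2 - 3*s'*w.2.1 + 3*s'^2*w.1| ≤ 7 * (R ^ (-1 : ℝ))} := by
  intro w hw
  obtain ⟨h1, h2, h3⟩ := hw
  set δ : ℝ := R ^ (-(1/3) : ℝ) with hδdef
  have hR0 : (0:ℝ) < R := lt_trans one_pos hR
  have hδpos : 0 < δ := Real.rpow_pos_of_pos hR0 _
  have hσpos : 0 < σ := lt_of_lt_of_le hδpos hσ₁
  have hδ2 : R ^ (-(2/3) : ℝ) = δ ^ 2 := by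
    rw [hδdef, ← Real.rpow_natCast (R ^ (-(1/3):ℝ)) 2, ← Real.rpow_mul hR0.le]
    norm_num
  have hδ3 : R ^ (-1 : ℝ) = δ ^ 3 := by
    rw [hδdef, ← Real.rpow_natCast (R ^ (-(1/3):ℝ)) 3, ← Real.rpow_mul hR0.le]
    norm_num
  rw [hδ2] at h2 ⊢
  rw [hδ3] at h3 ⊢
  set t : ℝ := s - s' with htdef
  have ht : |t| ≤ δ * σ⁻¹ := hss'
  have ht' : |t| * σ ≤ δ := by
    calc |t| * σ ≤ (δ * σ⁻¹) * σ := by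
          exact mul_le_mul_of_nonneg_right ht hσpos.le
      _ = δ := by field_simp
  have habs_t : 0 ≤ |t| := abs_nonneg _
  have habs1 : 0 ≤ |w.1| := abs_nonneg _
  have habs2 : 0 ≤ |w.2.1 - 2*s*w.1| := abs_nonneg _
  -- |t| * |w₁| ≤ δ² σ
  have key1 : |t| * |w.1| ≤ δ^2 * σ := by
    calc |t| * |w.1| ≤ (δ * σ⁻¹) * (δ * σ^2) :=
          mul_le_mul ht h1 habs1 (by positivity)
      _ = δ^2 * σ := by field_simp
  -- |t| * |w₂ - 2sw₁| ≤ δ³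
  have key2 : |t| * |w.2.1 - 2*s*w.1| ≤ δ^3 := by
    calc |t| * |w.2.1 - 2*s*w.1| ≤ (δ * σ⁻¹) * (δ^2 * σ) :=
          mul_le_mul ht h2 habs2 (by positivity)
      _ = δ^3 := by field_simp
  -- |t|² * |w₁| ≤ δ³
  have key3 : |t|^2 * |w.1| ≤ δ^3 := by
    calc |t|^2 * |w.1| ≤ (δ * σ⁻¹)^2 * (δ * σ^2) := by
          apply mul_le_mul _ h1 habs1 (by positivity)
          exact pow_le_pow_left₀ habs_t ht 2
      _ = δ^3 := by field_simp
  refine ⟨?_, ?_, ?_⟩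
  · calc |w.1| ≤ δ * σ^2 := h1
      _ ≤ 7 * (δ * σ^2) := by nlinarith [sq_nonneg σ]
  · have hid : w.2.1 - 2*s'*w.1 = (w.2.1 - 2*s*w.1) + 2*t*w.1 := by
      rw [htdef]; ring
    rw [hid]
    calc |(w.2.1 - 2*s*w.1) + 2*t*w.1| ≤ |w.2.1 - 2*s*w.1| + |2*t*w.1| := abs_add_le _ _
      _ = |w.2.1 - 2*s*w.1| + 2 * (|t| * |w.1|) := by
          rw [abs_mul, abs_mul]; norm_num [mul_assoc]
      _ ≤ δ^2 * σ + 2 * (δ^2 * σ) := by linarith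
      _ ≤ 7 * (δ^2 * σ) := by nlinarith [sq_nonneg δ]
  · have hid : w.2.2 - 3*s'*w.2.1 + 3*s'^2*w.1 =
        (w.2.2 - 3*s*w.2.1 + 3*s^2*w.1) + 3*t*(w.2.1 - 2*s*w.1) + 3*t^2*w.1 := by
      have : s' = s - t := by rw [htdef]; ring
      rw [this]; ring
    rw [hid]
    calc |(w.2.2 - 3*s*w.2.1 + 3*s^2*w.1) + 3*t*(w.2.1 - 2*s*w.1) + 3*t^2*w.1|
        ≤ |(w.2.2 - 3*s*w.2.1 + 3*s^2*w.1) + 3*t*(w.2.1 - 2*s*w.1)| + |3*t^2*w.1| :=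
          abs_add_le _ _
      _ ≤ |w.2.2 - 3*s*w.2.1 + 3*s^2*w.1| + |3*t*(w.2.1 - 2*s*w.1)| + |3*t^2*w.1| := by
          linarith [abs_add_le (w.2.2 - 3*s*w.2.1 + 3*s^2*w.1) (3*t*(w.2.1 - 2*s*w.1))]
      _ = |w.2.2 - 3*s*w.2.1 + 3*s^2*w.1| + 3*(|t| * |w.2.1 - 2*s*w.1|)
            + 3*(|t|^2 * |w.1|) := by
          rw [abs_mul, abs_mul, abs_mul, abs_mul, ← abs_pow]; norm_num [mul_assoc]
      _ ≤ δ^3 + 3*δ^3 + 3*δ^3 := by linarith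
      _ = 7 * δ^3 := by ring
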